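/- (Carlitz integrality) For every g ∈ 𝔽_q[t] and every k ≥ 0, the element e_k(g)/D_k lies in 𝔽_q[t]. -/

import Mathlib

open Polynomial in
/-- The Carlitz polynomial `e_k(X) = ∏ (X - α)`, product over all `α ∈ 𝔽_q[t]` of degree `< k`. -/
noncomputable def carlitzE (F : Type*) [Field F] [Fintype F] (k : ℕ) :
    Polynomial (Polynomial F) :=
  ∏ c : Fin k → F, (X - C (∑ i : Fin k, Polynomial.C (c i) * X ^ (i : ℕ)))

open Polynomial Finset UniqueFactorizationMonoid

section CarlitzAux

variable {F : Type*} [Field F] [Fintype F]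

/-- `carlitzBeta k c` is the polynomial of degree `< k` with coefficients `c`. -/
noncomputable def carlitzBeta (k : ℕ) (c : Fin k → F) : Polynomial F :=
  ∑ i : Fin k, C (c i) * X ^ (i : ℕ)

lemma carlitzBeta_degree_lt (k : ℕ) (c : Fin k → F) :
    (carlitzBeta k c).degree < (k : WithBot ℕ) :=
  degree_sum_fin_lt c

lemma carlitzBeta_coeff (k : ℕ) (c : Fin k → F) (i : Fin k) :
    (carlitzBeta k c).coeff i = c i := by
  classical
  simp only [carlitzBeta, finset_sum_coeff, coeff_C_mul, coeff_X_pow]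
  rw [Finset.sum_eq_single i]
  · simp
  · intro b _ hb
    have hbi : ¬((i : ℕ) = (b : ℕ)) := fun h => hb (Fin.ext h.symm)
    simp [hbi]
  · simp

lemma carlitzBeta_injective (k : ℕ) : Function.Injective (carlitzBeta (F := F) k) := by
  intro c₁ c₂ h
  funext i
  rw [← carlitzBeta_coeff k c₁ i, ← carlitzBeta_coeff k c₂ i, h]

lemma carlitzBeta_of_degree_lt (k : ℕ) (γ : Polynomial F) (hγ : γ.degree < (k : WithBot ℕ)) :
    carlitzBeta k (fun i : Fin k => γ.coeff i) = γ := by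
  rcases eq_or_ne γ 0 with rfl | h0
  · simp [carlitzBeta]
  · have hnd : γ.natDegree < k := by
      rwa [natDegree_lt_iff_degree_lt h0]
    conv_rhs => rw [γ.as_sum_range' k hnd]
    rw [carlitzBeta, Fin.sum_univ_eq_sum_range (fun i => C (γ.coeff i) * X ^ i)]
    simp [C_mul_X_pow_eq_monomial]

lemma carlitz_eval (k : ℕ) (x : Polynomial F) :
    (carlitzE F k).eval x = ∏ c : Fin k → F, (x - carlitzBeta k c) := by
  rw [carlitzE, eval_prod]
  exact Finset.prod_congr rfl fun c _ => by rw [eval_sub, eval_X, eval_C]; rfl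

lemma carlitz_factor_degree (k : ℕ) (c : Fin k → F) :
    ((X : Polynomial F) ^ k - carlitzBeta k c).degree = (k : WithBot ℕ) := by
  have h : (carlitzBeta k c).degree < ((X : Polynomial F) ^ k).degree := by
    rw [degree_X_pow]; exact carlitzBeta_degree_lt k c
  rw [degree_sub_eq_left_of_degree_lt h, degree_X_pow]

lemma carlitz_factor_ne_zero (k : ℕ) (c : Fin k → F) :
    (X : Polynomial F) ^ k - carlitzBeta k c ≠ 0 := by
  intro h
  have := carlitz_factor_degree k c
  rw [h, degree_zero] at this
  exact WithBot.bot_ne_coe this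

end CarlitzAux

open Polynomial in
/-- **Carlitz integrality**: `D_k = e_k(t^k)` divides `e_k(g)` for every `g ∈ 𝔽_q[t]`,
i.e. `e_k(g)/D_k ∈ 𝔽_q[t]`. -/
theorem carlitz_integrality (F : Type*) [Field F] [Fintype F] (k : ℕ) (g : Polynomial F) :
    (carlitzE F k).eval ((X : Polynomial F) ^ k) ∣ (carlitzE F k).eval g := by
  classical
  rw [carlitz_eval, carlitz_eval]
  by_cases hg : ∃ c : Fin k → F, g - carlitzBeta k c = 0
  · obtain ⟨c, hc⟩ := hg
    have hz : (∏ c : Fin k → F, (g - carlitzBeta k c)) = 0 :=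
      Finset.prod_eq_zero (mem_univ c) hc
    rw [hz]
    exact dvd_zero _
  push_neg at hg
  have hD : (∏ c : Fin k → F, ((X : Polynomial F) ^ k - carlitzBeta k c)) ≠ 0 :=
    Finset.prod_ne_zero_iff.mpr fun c _ => carlitz_factor_ne_zero k c
  have hE : (∏ c : Fin k → F, (g - carlitzBeta k c)) ≠ 0 :=
    Finset.prod_ne_zero_iff.mpr fun c _ => hg c
  rw [UniqueFactorizationMonoid.dvd_iff_normalizedFactors_le_normalizedFactors hD hE,
    Multiset.le_iff_count]
  intro p
  by_cases hp : p ∈ normalizedFactors (∏ c : Fin k → F, ((X : Polynomial F) ^ k - carlitzBeta k c))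
  swap
  · simp [Multiset.count_eq_zero_of_notMem hp]
  have hpirr : Irreducible p := irreducible_of_normalized_factor _ hp
  have hpnorm : normalize p = p := normalize_normalized_factor _ hp
  have hp0 : p ≠ 0 := hpirr.ne_zero
  have hmonic : p.Monic := hpnorm ▸ monic_normalize hp0
  have he : 0 < p.natDegree := hpirr.natDegree_pos
  -- additivity of the count over finite products
  have hcount : ∀ (f : (Fin k → F) → Polynomial F), (∀ c, f c ≠ 0) →
      (normalizedFactors (∏ c : Fin k → F, f c)).count p
        = ∑ c : Fin k → F, (normalizedFactors (f c)).count p := by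
    intro f hf
    have : ∀ s : Finset (Fin k → F), (normalizedFactors (∏ c ∈ s, f c)).count p
        = ∑ c ∈ s, (normalizedFactors (f c)).count p := by
      intro s
      induction s using Finset.cons_induction with
      | empty => simp [normalizedFactors_one]
      | cons a s ha ih =>
        rw [Finset.prod_cons, Finset.sum_cons,
          normalizedFactors_mul (hf a) (Finset.prod_ne_zero_iff.mpr fun c _ => hf c),
          Multiset.count_add, ih]
    exact this univ
  -- characterization of divisibility by powers of p
  have hdvd : ∀ x : Polynomial F, x ≠ 0 → ∀ j : ℕ,
      (p ^ j ∣ x ↔ j ≤ (normalizedFactors x).count p) := by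
    intro x hx j
    rw [pow_dvd_iff_le_emultiplicity,
      UniqueFactorizationMonoid.emultiplicity_eq_count_normalizedFactors hpirr hx, hpnorm,
      Nat.cast_le]
  -- counting formulas
  have hcard_eq : ∀ x : Polynomial F, x ≠ 0 → (normalizedFactors x).count p ≤ k →
      (normalizedFactors x).count p = ((Icc 1 k).filter (fun j => p ^ j ∣ x)).card := by
    intro x hx hn
    have hset : (Icc 1 k).filter (fun j => p ^ j ∣ x) = Icc 1 ((normalizedFactors x).count p) := by
      ext j
      simp only [mem_filter, mem_Icc, hdvd x hx j]
      omega
    rw [hset, Nat.card_Icc]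
    omega
  have hcard_le : ∀ x : Polynomial F, x ≠ 0 →
      ((Icc 1 k).filter (fun j => p ^ j ∣ x)).card ≤ (normalizedFactors x).count p := by
    intro x hx
    calc ((Icc 1 k).filter (fun j => p ^ j ∣ x)).card
        ≤ (Icc 1 ((normalizedFactors x).count p)).card := by
          apply Finset.card_le_card
          intro j hj
          rw [mem_filter, mem_Icc] at hj
          rw [mem_Icc]
          exact ⟨hj.1.1, (hdvd x hx j).1 hj.2⟩
      _ = (normalizedFactors x).count p := by rw [Nat.card_Icc]; omega
  -- natDegree of the factors on the left
  have hndD : ∀ c : Fin k → F, ((X : Polynomial F) ^ k - carlitzBeta k c).natDegree = k := by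
    intro c
    exact natDegree_eq_of_degree_eq_some (carlitz_factor_degree k c)
  have hordD_le : ∀ c : Fin k → F,
      (normalizedFactors ((X : Polynomial F) ^ k - carlitzBeta k c)).count p ≤ k := by
    intro c
    set n := (normalizedFactors ((X : Polynomial F) ^ k - carlitzBeta k c)).count p with hn
    have hd : p ^ n ∣ (X : Polynomial F) ^ k - carlitzBeta k c :=
      (hdvd _ (carlitz_factor_ne_zero k c) n).2 le_rfl
    have hle := natDegree_le_of_dvd hd (carlitz_factor_ne_zero k c)
    rw [natDegree_pow, hndD c] at hle
    calc n = n * 1 := (mul_one n).symm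
      _ ≤ n * p.natDegree := Nat.mul_le_mul_left n he
      _ ≤ k := hle
  -- the key per-exponent cardinality inequality
  have hkey : ∀ j ∈ Icc 1 k,
      (univ.filter (fun c : Fin k → F => p ^ j ∣ (X : Polynomial F) ^ k - carlitzBeta k c)).card
      ≤ (univ.filter (fun c : Fin k → F => p ^ j ∣ g - carlitzBeta k c)).card := by
    intro j _
    have hmonpj : ((p : Polynomial F) ^ j).Monic := hmonic.pow j
    set r₀ : Polynomial F := g %ₘ p ^ j with hr₀
    set r₁ : Polynomial F := ((X : Polynomial F) ^ k) %ₘ p ^ j with hr₁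
    apply Finset.card_le_card_of_injOn
      (fun c => fun i : Fin k => (carlitzBeta k c + r₀ - r₁).coeff i)
    · -- maps to
      intro c hc
      rw [Finset.mem_coe, mem_filter] at hc
      have hc' : p ^ j ∣ (X : Polynomial F) ^ k - carlitzBeta k c := hc.2
      -- j * e ≤ k
      have hjek : (p ^ j).natDegree ≤ k := by
        have := natDegree_le_of_dvd hc' (carlitz_factor_ne_zero k c)
        rwa [hndD c] at this
      have hdegpj : ((p : Polynomial F) ^ j).degree ≤ (k : WithBot ℕ) := by
        rw [degree_eq_natDegree (pow_ne_zero j hp0)]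
        exact_mod_cast hjek
      have hdr₀ : r₀.degree < (k : WithBot ℕ) :=
        lt_of_lt_of_le (degree_modByMonic_lt g hmonpj) hdegpj
      have hdr₁ : r₁.degree < (k : WithBot ℕ) :=
        lt_of_lt_of_le (degree_modByMonic_lt _ hmonpj) hdegpj
      have hdeg : (carlitzBeta k c + r₀ - r₁).degree < (k : WithBot ℕ) := by
        apply lt_of_le_of_lt (degree_sub_le _ _)
        apply max_lt _ hdr₁
        apply lt_of_le_of_lt (degree_add_le _ _)
        exact max_lt (carlitzBeta_degree_lt k c) hdr₀
      have hβT : carlitzBeta k (fun i : Fin k => (carlitzBeta k c + r₀ - r₁).coeff i)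
          = carlitzBeta k c + r₀ - r₁ := carlitzBeta_of_degree_lt k _ hdeg
      rw [Finset.mem_coe, mem_filter]
      refine ⟨mem_univ _, ?_⟩
      rw [hβT]
      have h1 : p ^ j ∣ g - r₀ := by
        rw [hr₀, modByMonic_eq_sub_mul_div g (p ^ j)]
        simp only [sub_sub_cancel]
        exact dvd_mul_right _ _
      have h2 : p ^ j ∣ (X : Polynomial F) ^ k - r₁ := by
        rw [hr₁, modByMonic_eq_sub_mul_div _ (p ^ j)]
        simp only [sub_sub_cancel]
        exact dvd_mul_right _ _
      have : g - (carlitzBeta k c + r₀ - r₁)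
          = (g - r₀) - ((X : Polynomial F) ^ k - r₁) + ((X : Polynomial F) ^ k - carlitzBeta k c) := by
        ring
      rw [this]
      exact dvd_add (dvd_sub h1 h2) hc'
    · -- injectivity
      intro c₁ hc₁ c₂ hc₂ hT
      rw [Finset.mem_coe, mem_filter] at hc₁ hc₂
      have mk : ∀ c : Fin k → F, p ^ j ∣ (X : Polynomial F) ^ k - carlitzBeta k c →
          carlitzBeta k (fun i : Fin k => (carlitzBeta k c + r₀ - r₁).coeff i)
            = carlitzBeta k c + r₀ - r₁ := by
        intro c hc'
        have hjek : (p ^ j).natDegree ≤ k := by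
          have := natDegree_le_of_dvd hc' (carlitz_factor_ne_zero k c)
          rwa [hndD c] at this
        have hdegpj : ((p : Polynomial F) ^ j).degree ≤ (k : WithBot ℕ) := by
          rw [degree_eq_natDegree (pow_ne_zero j hp0)]
          exact_mod_cast hjek
        have hdr₀ : r₀.degree < (k : WithBot ℕ) :=
          lt_of_lt_of_le (degree_modByMonic_lt g hmonpj) hdegpj
        have hdr₁ : r₁.degree < (k : WithBot ℕ) :=
          lt_of_lt_of_le (degree_modByMonic_lt _ hmonpj) hdegpj
        apply carlitzBeta_of_degree_lt
        apply lt_of_le_of_lt (degree_sub_le _ _)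
        apply max_lt _ hdr₁
        apply lt_of_le_of_lt (degree_add_le _ _)
        exact max_lt (carlitzBeta_degree_lt k c) hdr₀
      have h1 := mk c₁ hc₁.2
      have h2 := mk c₂ hc₂.2
      have hββ' : carlitzBeta k c₁ + r₀ - r₁ = carlitzBeta k c₂ + r₀ - r₁ := by
        rw [← h1, ← h2]
        exact congrArg _ hT
      have hββ : carlitzBeta k c₁ = carlitzBeta k c₂ := by
        rwa [sub_left_inj, add_left_inj] at hββ'
      exact carlitzBeta_injective k hββ
  -- put everything together
  calc (normalizedFactors (∏ c : Fin k → F,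
          ((X : Polynomial F) ^ k - carlitzBeta k c))).count p
      = ∑ c : Fin k → F,
          (normalizedFactors ((X : Polynomial F) ^ k - carlitzBeta k c)).count p :=
        hcount _ (fun c => carlitz_factor_ne_zero k c)
    _ = ∑ c : Fin k → F,
          ((Icc 1 k).filter (fun j => p ^ j ∣ (X : Polynomial F) ^ k - carlitzBeta k c)).card :=
        Finset.sum_congr rfl fun c _ =>
          hcard_eq _ (carlitz_factor_ne_zero k c) (hordD_le c)
    _ = ∑ j ∈ Icc 1 k,
          (univ.filter (fun c : Fin k → F =>
            p ^ j ∣ (X : Polynomial F) ^ k - carlitzBeta k c)).card := by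
        simp only [Finset.card_filter]
        exact Finset.sum_comm
    _ ≤ ∑ j ∈ Icc 1 k,
          (univ.filter (fun c : Fin k → F => p ^ j ∣ g - carlitzBeta k c)).card :=
        Finset.sum_le_sum hkey
    _ = ∑ c : Fin k → F,
          ((Icc 1 k).filter (fun j => p ^ j ∣ g - carlitzBeta k c)).card := by
        simp only [Finset.card_filter]
        exact Finset.sum_comm
    _ ≤ ∑ c : Fin k → F, (normalizedFactors (g - carlitzBeta k c)).count p :=
        Finset.sum_le_sum fun c _ => hcard_le _ (hg c)
    _ = (normalizedFactors (∏ c : Fin k → F, (g - carlitzBeta k c))).count p :=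
        (hcount _ hg).symm
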